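/- Let k be a field, V and W finite-dimensional k-vector spaces, and let (f, g) be a nilpotent pair, i.e. f : V →ₗ[k] W, g : W →ₗ[k] V with g ∘ f nilpotent. If v ∈ V is unbalanced, then the vector f v ∈ W is balanced, i.e. dim T'[f v] = dim T[g (f v)]. -/
import Mathlib


/-- `orbitSpan T v` is the submodule `T[v]` spanned by `{T^i v : i ∈ ℕ}`. -/
def orbitSpan {k V : Type*} [Field k] [AddCommGroup V] [Module k V]
    (T : V →ₗ[k] V) (v : V) : Submodule k V :=
  Submodule.span k (Set.range fun i : ℕ => (T ^ i) v)

lemma powA {k V W : Type*} [Field k] [AddCommGroup V] [Module k V]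
    [AddCommGroup W] [Module k W] (f : V →ₗ[k] W) (g : W →ₗ[k] V) (i : ℕ) (x : V) :
    ((f ∘ₗ g) ^ i) (f x) = f (((g ∘ₗ f) ^ i) x) := by
  induction i with
  | zero => simp
  | succ n ih =>
    rw [pow_succ', pow_succ', Module.End.mul_apply, Module.End.mul_apply, ih]
    simp

lemma finrank_orbitSpan {k V : Type*} [Field k] [AddCommGroup V] [Module k V]
    [FiniteDimensional k V] (T : V →ₗ[k] V) (hT : IsNilpotent T) (v : V) :
    Module.finrank k (orbitSpan T v) = sInf {n : ℕ | (T ^ n) v = 0} := by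
  obtain ⟨N, hN⟩ := hT
  have hSne : {n : ℕ | (T ^ n) v = 0}.Nonempty := ⟨N, by simp [hN]⟩
  set n := sInf {n : ℕ | (T ^ n) v = 0} with hn
  have hnmem : (T ^ n) v = 0 := Nat.sInf_mem hSne
  have hlt : ∀ i < n, (T ^ i) v ≠ 0 := fun i hi h => (Nat.not_lt.mpr (Nat.sInf_le h)) hi
  have hbig : ∀ i, n ≤ i → (T ^ i) v = 0 := by
    intro i hi
    have : i = (i - n) + n := by omega
    rw [this, pow_add, Module.End.mul_apply, hnmem, map_zero]
  have hspan : orbitSpan T v =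
      Submodule.span k (Set.range fun i : Fin n => (T ^ (i : ℕ)) v) := by
    apply le_antisymm
    · rw [orbitSpan, Submodule.span_le]
      rintro _ ⟨i, rfl⟩
      show (T ^ i) v ∈ _
      by_cases h : i < n
      · exact Submodule.subset_span ⟨⟨i, h⟩, rfl⟩
      · rw [hbig i (by omega)]; exact Submodule.zero_mem _
    · rw [Submodule.span_le]
      rintro _ ⟨i, rfl⟩
      exact Submodule.subset_span ⟨(i : ℕ), rfl⟩
  have hli : LinearIndependent k (fun i : Fin n => (T ^ (i : ℕ)) v) := by
    rw [Fintype.linearIndependent_iff]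
    intro c hc i
    obtain ⟨m, hm⟩ : ∃ m, (i : ℕ) = m := ⟨_, rfl⟩
    induction m using Nat.strong_induction_on generalizing i with
    | _ m ih =>
      subst hm
      have hpos : 0 < n := i.pos
      have h2 := congrArg (fun x => (T ^ (n - 1 - (i : ℕ))) x) hc
      simp only [map_sum, map_smul, map_zero] at h2
      have h3 : ∀ l : Fin n, (T ^ (n - 1 - (i : ℕ))) ((T ^ (l : ℕ)) v)
          = (T ^ ((n - 1 - (i : ℕ)) + (l : ℕ))) v := by
        intro l; rw [pow_add, Module.End.mul_apply]
      simp only [h3] at h2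
      have h4 : ∀ l : Fin n, l ≠ i →
          c l • (T ^ ((n - 1 - (i : ℕ)) + (l : ℕ))) v = 0 := by
        intro l hl
        rcases lt_or_gt_of_ne (fun h => hl (Fin.ext h) : (l : ℕ) ≠ (i : ℕ)) with h | h
        · rw [ih _ h l rfl, zero_smul]
        · rw [hbig _ (by have := i.isLt; have := l.isLt; omega), smul_zero]
      rw [Finset.sum_eq_single i (fun l _ hl => h4 l hl) (by simp)] at h2
      have heq : (n - 1 - (i : ℕ)) + (i : ℕ) = n - 1 := by have := i.isLt; omega
      rw [heq] at h2
      rcases smul_eq_zero.mp h2 with h | h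
      · exact h
      · exact absurd h (hlt _ (by omega))
  rw [hspan, finrank_span_eq_card hli, Fintype.card_fin]

theorem image_of_unbalanced_is_balanced
    (k V W : Type*) [Field k] [AddCommGroup V] [Module k V] [FiniteDimensional k V]
    [AddCommGroup W] [Module k W] [FiniteDimensional k W]
    (f : V →ₗ[k] W) (g : W →ₗ[k] V) (hnil : IsNilpotent (g ∘ₗ f))
    (v : V)
    (hv : Module.finrank k (orbitSpan (f ∘ₗ g) (f v)) + 1 =
      Module.finrank k (orbitSpan (g ∘ₗ f) v)) :
    Module.finrank k (orbitSpan (f ∘ₗ g) (f v)) =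
      Module.finrank k (orbitSpan (g ∘ₗ f) (g (f v))) := by
  obtain ⟨N, hN⟩ := hnil
  have hnil' : IsNilpotent (f ∘ₗ g) := by
    refine ⟨N + 1, ?_⟩
    ext w
    rw [pow_succ, Module.End.mul_apply]
    have : ((f ∘ₗ g) ^ N) ((f ∘ₗ g) w) = ((f ∘ₗ g) ^ N) (f (g w)) := rfl
    rw [this, powA, hN]
    simp
  rw [finrank_orbitSpan (f ∘ₗ g) hnil' (f v), finrank_orbitSpan (g ∘ₗ f) ⟨N, hN⟩ v] at hv
  rw [finrank_orbitSpan (f ∘ₗ g) hnil' (f v), finrank_orbitSpan (g ∘ₗ f) ⟨N, hN⟩ (g (f v))]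
  set T := g ∘ₗ f with hT
  have hSv : {i : ℕ | (T ^ i) v = 0}.Nonempty := ⟨N, by simp [hN]⟩
  set n := sInf {i : ℕ | (T ^ i) v = 0} with hn
  have hnmem : (T ^ n) v = 0 := Nat.sInf_mem hSv
  have hkey : ∀ i : ℕ, (T ^ i) (g (f v)) = (T ^ (i + 1)) v := by
    intro i
    rw [powA g f i (f v), powA f g i v, pow_succ', Module.End.mul_apply]
    rfl
  have hkey2 : ∀ i : ℕ, ((f ∘ₗ g) ^ i) (f v) = f ((T ^ i) v) := fun i => powA f g i v
  have hmmem : sInf {i : ℕ | ((f ∘ₗ g) ^ i) (f v) = 0} ∈ {i : ℕ | (T ^ i) (g (f v)) = 0} := by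
    show (T ^ _) (g (f v)) = 0
    rw [hkey, hv]
    exact hnmem
  have hple := Nat.sInf_le hmmem
  have hpmem : sInf {i : ℕ | (T ^ i) (g (f v)) = 0} ∈ {i : ℕ | (T ^ i) (g (f v)) = 0} :=
    Nat.sInf_mem ⟨_, hmmem⟩
  have hp2 : (T ^ (sInf {i : ℕ | (T ^ i) (g (f v)) = 0} + 1)) v = 0 := by
    rw [← hkey]; exact hpmem
  have hle : n ≤ sInf {i : ℕ | (T ^ i) (g (f v)) = 0} + 1 := Nat.sInf_le hp2
  omega
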